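/- Assume the intensity measure density is log-normal: p(a) = (√(2πσ²)·a)^{-1}·exp(-(log a - μ)²/(2σ²)) on (0,∞), with parameters μ ∈ ℝ, σ > 0. For k = 0,1,2 and θ = (α,β) ∈ (0,∞)², define A_{k1,k2}(α,β) = ∫_0^∞ log^k(a/α)·Φ'(γ(a))²/[Φ(γ(a))(1-Φ(γ(a)))]·p(a) da, where γ(a) = (log a - log α)/β and Φ'(x) = (2π)^{-1/2}exp(-x²/2). Then for each fixed α > 0: (i) for k = 0 and k = 2 there exist constants D_k(α) > 0 such that A_{k1,k2}(α,β) ~ D_k(α)·β^{k+1} as β → 0; (ii) A_{11,12}(α,β) = o(β²) as β → 0. -/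

import Mathlib

open MeasureTheory Real Filter Set

/-- The standard Gaussian cumulative distribution function. -/
noncomputable def Phi (x : ℝ) : ℝ :=
  (Real.sqrt (2 * Real.pi))⁻¹ * ∫ t in Set.Iic x, Real.exp (-t ^ 2 / 2)

/-- The standard Gaussian density `Φ'(x) = (2π)^{-1/2} exp(-x²/2)`. -/
noncomputable def Phi' (x : ℝ) : ℝ :=
  (Real.sqrt (2 * Real.pi))⁻¹ * Real.exp (-x ^ 2 / 2)

/-- The log-normal intensity measure density
`p(a) = (√(2πσ²)·a)⁻¹ exp(-(log a - μ)²/(2σ²))`. -/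
noncomputable def pLN (μ σ a : ℝ) : ℝ :=
  (Real.sqrt (2 * Real.pi * σ ^ 2) * a)⁻¹ * Real.exp (-(Real.log a - μ) ^ 2 / (2 * σ ^ 2))

/-- `A_{k1,k2}(α,β) = ∫₀^∞ log^k(a/α)·Φ'(γ(a))²/[Φ(γ(a))(1-Φ(γ(a)))]·p(a) da`
with `γ(a) = (log a - log α)/β`. -/
noncomputable def A (μ σ : ℝ) (k : ℕ) (α β : ℝ) : ℝ :=
  ∫ a in Set.Ioi (0 : ℝ),
    Real.log (a / α) ^ k *
      (Phi' ((Real.log a - Real.log α) / β) ^ 2 /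
        (Phi ((Real.log a - Real.log α) / β) *
          (1 - Phi ((Real.log a - Real.log α) / β)))) * pLN μ σ a

/-- The Jeffreys prior, `J(θ) = √(|A₀₁,₀₂·A₂₁,₂₂ − A₁₁,₁₂²| / (α²β⁶))`. -/
noncomputable def Jeff (μ σ α β : ℝ) : ℝ :=
  Real.sqrt (|A μ σ 0 α β * A μ σ 2 α β - A μ σ 1 α β ^ 2| / (α ^ 2 * β ^ 6))

/-! ### Auxiliary definitions and lemmas -/

/-- The ratio `Φ'(u)²/(Φ(u)(1-Φ(u)))`. -/
noncomputable def gfun (u : ℝ) : ℝ := Phi' u ^ 2 / (Phi u * (1 - Phi u))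

lemma gfun_def (u : ℝ) : Phi' u ^ 2 / (Phi u * (1 - Phi u)) = gfun u := rfl

/-- The normal density with mean `μ` and sd `σ`. -/
noncomputable def Ndens (μ σ x : ℝ) : ℝ :=
  (Real.sqrt (2 * Real.pi * σ ^ 2))⁻¹ * Real.exp (-(x - μ) ^ 2 / (2 * σ ^ 2))

lemma sqrt_two_pi_pos : 0 < Real.sqrt (2 * Real.pi) :=
  Real.sqrt_pos.2 (by positivity)

lemma integrable_gauss : Integrable (fun t : ℝ => Real.exp (-t ^ 2 / 2)) := by
  have h := integrable_exp_neg_mul_sq (by norm_num : (0:ℝ) < 1/2)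
  have he : (fun t : ℝ => Real.exp (-t ^ 2 / 2)) = fun t : ℝ => Real.exp (-(1/2 : ℝ) * t ^ 2) := by
    funext t; congr 1; ring
  rw [he]; exact h

lemma integral_gauss_total : (∫ t : ℝ, Real.exp (-t ^ 2 / 2)) = Real.sqrt (2 * Real.pi) := by
  have h := integral_gaussian (1/2 : ℝ)
  rw [show Real.pi / (1/2 : ℝ) = 2 * Real.pi by ring] at h
  rw [← h]
  congr 1; funext t; congr 1; ring

lemma gauss_support_univ :
    Function.support (fun t : ℝ => Real.exp (-t ^ 2 / 2)) = Set.univ := by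
  ext t; simp [Function.support, Real.exp_ne_zero]

lemma Iic_gauss_pos (x : ℝ) : 0 < ∫ t in Set.Iic x, Real.exp (-t ^ 2 / 2) := by
  rw [integral_pos_iff_support_of_nonneg (fun t => Real.exp_nonneg _)
    integrable_gauss.restrict]
  rw [gauss_support_univ]
  simp [Real.volume_Iic]

lemma Ioi_gauss_pos (x : ℝ) : 0 < ∫ t in Set.Ioi x, Real.exp (-t ^ 2 / 2) := by
  rw [integral_pos_iff_support_of_nonneg (fun t => Real.exp_nonneg _)
    integrable_gauss.restrict]
  rw [gauss_support_univ]
  simp [Real.volume_Ioi]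

lemma gauss_split (x : ℝ) :
    (∫ t in Set.Iic x, Real.exp (-t ^ 2 / 2)) + ∫ t in Set.Ioi x, Real.exp (-t ^ 2 / 2)
      = Real.sqrt (2 * Real.pi) := by
  rw [intervalIntegral.integral_Iic_add_Ioi integrable_gauss.integrableOn integrable_gauss.integrableOn]
  exact integral_gauss_total

lemma Phi_pos (x : ℝ) : 0 < Phi x :=
  mul_pos (inv_pos.2 sqrt_two_pi_pos) (Iic_gauss_pos x)

lemma one_sub_Phi (x : ℝ) :
    1 - Phi x = (Real.sqrt (2 * Real.pi))⁻¹ * ∫ t in Set.Ioi x, Real.exp (-t ^ 2 / 2) := by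
  have h := gauss_split x
  have h2 : (Real.sqrt (2 * Real.pi))⁻¹ * Real.sqrt (2 * Real.pi) = 1 :=
    inv_mul_cancel₀ sqrt_two_pi_pos.ne'
  simp only [Phi]
  linear_combination (-(Real.sqrt (2 * Real.pi))⁻¹) * h - h2

lemma Phi_lt_one (x : ℝ) : Phi x < 1 := by
  have h := one_sub_Phi x
  nlinarith [mul_pos (inv_pos.2 sqrt_two_pi_pos) (Ioi_gauss_pos x)]

lemma Phi_neg (x : ℝ) : Phi (-x) = 1 - Phi x := by
  have h := integral_comp_neg_Iic (-x) (fun t : ℝ => Real.exp (-t ^ 2 / 2))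
  simp only [neg_neg, neg_sq] at h
  rw [one_sub_Phi]
  simp only [Phi]
  rw [h]

lemma Phi_zero : Phi 0 = 1/2 := by
  have h := Phi_neg 0
  rw [neg_zero] at h
  linarith

lemma Phi_mono : Monotone Phi := by
  intro x y hxy
  apply mul_le_mul_of_nonneg_left _ (inv_nonneg.2 (Real.sqrt_nonneg _))
  exact setIntegral_mono_set integrable_gauss.integrableOn
    (Eventually.of_forall fun t => Real.exp_nonneg _)
    (HasSubset.Subset.eventuallyLE (Set.Iic_subset_Iic.2 hxy))

lemma Phi_meas : Measurable Phi := Phi_mono.measurable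

lemma Phi'_pos (x : ℝ) : 0 < Phi' x :=
  mul_pos (inv_pos.2 sqrt_two_pi_pos) (Real.exp_pos _)

lemma denom_pos (x : ℝ) : 0 < Phi x * (1 - Phi x) :=
  mul_pos (Phi_pos x) (by linarith [Phi_lt_one x])

lemma gfun_pos (u : ℝ) : 0 < gfun u :=
  div_pos (pow_pos (Phi'_pos u) 2) (denom_pos u)

lemma gfun_even (u : ℝ) : gfun (-u) = gfun u := by
  unfold gfun Phi'
  rw [Phi_neg, neg_sq]
  ring

lemma gfun_meas : Measurable gfun := by
  unfold gfun Phi'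
  apply Measurable.div
  · apply Measurable.pow_const
    exact measurable_const.mul (Real.measurable_exp.comp (by fun_prop))
  · exact Phi_meas.mul (measurable_const.sub Phi_meas)

lemma one_sub_Phi_ge (u : ℝ) (hu : 0 ≤ u) :
    (Real.sqrt (2 * Real.pi))⁻¹ * Real.exp (-(u+1) ^ 2 / 2) ≤ 1 - Phi u := by
  rw [one_sub_Phi]
  apply mul_le_mul_of_nonneg_left _ (inv_nonneg.2 (Real.sqrt_nonneg _))
  have hvol : volume (Set.Ioc u (u+1)) = ENNReal.ofReal 1 := by
    rw [Real.volume_Ioc]; congr 1; ring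
  calc Real.exp (-(u+1) ^ 2 / 2)
      = Real.exp (-(u+1) ^ 2 / 2) * (volume (Set.Ioc u (u+1))).toReal := by
        rw [hvol]; simp
    _ ≤ ∫ t in Set.Ioc u (u+1), Real.exp (-t ^ 2 / 2) := by
        apply setIntegral_ge_of_const_le_real measurableSet_Ioc (by rw [hvol]; simp)
          ?_ integrable_gauss.integrableOn
        intro t ht
        apply Real.exp_le_exp.2
        have h1 : u < t := ht.1
        have h2 : t ≤ u + 1 := ht.2
        nlinarith
    _ ≤ ∫ t in Set.Ioi u, Real.exp (-t ^ 2 / 2) :=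
        setIntegral_mono_set integrable_gauss.integrableOn
          (Eventually.of_forall fun t => Real.exp_nonneg _)
          (HasSubset.Subset.eventuallyLE Set.Ioc_subset_Ioi_self)

lemma Phi_half (u : ℝ) (hu : 0 ≤ u) : (1/2 : ℝ) ≤ Phi u := by
  have := Phi_mono hu
  rw [Phi_zero] at this
  exact this

lemma gfun_le_aux (u : ℝ) (hu : 0 ≤ u) :
    gfun u ≤ 2 * (Real.sqrt (2 * Real.pi))⁻¹ * Real.exp ((u+1) ^ 2 / 2 - u ^ 2) := by
  have hsp := sqrt_two_pi_pos
  set s := Real.sqrt (2 * Real.pi) with hs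
  have hlow : (0:ℝ) < (1/2) * (s⁻¹ * Real.exp (-(u+1) ^ 2 / 2)) := by positivity
  have h1 : (1/2 : ℝ) * (s⁻¹ * Real.exp (-(u+1) ^ 2 / 2)) ≤ Phi u * (1 - Phi u) :=
    mul_le_mul (Phi_half u hu) (one_sub_Phi_ge u hu) (by positivity) (Phi_pos u).le
  have hnum : Phi' u ^ 2 =
      (2 * s⁻¹ * Real.exp ((u+1) ^ 2 / 2 - u ^ 2)) *
        ((1/2) * (s⁻¹ * Real.exp (-(u+1) ^ 2 / 2))) := by
    have key : Real.exp ((u+1) ^ 2 / 2 - u ^ 2) * Real.exp (-(u+1) ^ 2 / 2)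
        = Real.exp (-u ^ 2 / 2) * Real.exp (-u ^ 2 / 2) := by
      rw [← Real.exp_add, ← Real.exp_add]; congr 1; ring
    unfold Phi'
    rw [← hs]
    linear_combination (-(s⁻¹ ^ 2)) * key
  calc gfun u = Phi' u ^ 2 / (Phi u * (1 - Phi u)) := rfl
    _ ≤ Phi' u ^ 2 / ((1/2) * (s⁻¹ * Real.exp (-(u+1) ^ 2 / 2))) := by
        exact div_le_div_of_nonneg_left (pow_pos (Phi'_pos u) 2).le hlow h1
    _ = 2 * s⁻¹ * Real.exp ((u+1) ^ 2 / 2 - u ^ 2) := by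
        rw [hnum, mul_div_assoc, div_self hlow.ne', mul_one]

lemma gfun_le (u : ℝ) :
    gfun u ≤ 2 * (Real.sqrt (2 * Real.pi))⁻¹ * Real.exp ((|u|+1) ^ 2 / 2 - u ^ 2) := by
  rcases le_total 0 u with hu | hu
  · rw [abs_of_nonneg hu]; exact gfun_le_aux u hu
  · rw [abs_of_nonpos hu]
    have h := gfun_le_aux (-u) (neg_nonneg.2 hu)
    rwa [gfun_even, neg_sq] at h

lemma ukg_le (k : ℕ) (u : ℝ) :
    |u| ^ k * gfun u ≤
      2 * (Real.sqrt (2 * Real.pi))⁻¹ * Real.exp (((k:ℝ)+1) ^ 2 + 1/2) *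
        Real.exp (-u ^ 2 / 4) := by
  have h1 : |u| ^ k ≤ Real.exp ((k:ℝ) * |u|) := by
    calc |u| ^ k ≤ Real.exp |u| ^ k :=
          pow_le_pow_left₀ (abs_nonneg u) (by linarith [Real.add_one_le_exp |u|]) k
      _ = Real.exp ((k:ℝ) * |u|) := (Real.exp_nat_mul |u| k).symm
  have h2 := gfun_le u
  have h3 : Real.exp ((k:ℝ) * |u|) * Real.exp ((|u|+1) ^ 2 / 2 - u ^ 2)
      ≤ Real.exp (((k:ℝ)+1) ^ 2 + 1/2) * Real.exp (-u ^ 2 / 4) := by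
    rw [← Real.exp_add, ← Real.exp_add]
    apply Real.exp_le_exp.2
    have habs : |u| ^ 2 = u ^ 2 := sq_abs u
    nlinarith [sq_nonneg (|u|/2 - ((k:ℝ)+1)), abs_nonneg u]
  calc |u| ^ k * gfun u
      ≤ Real.exp ((k:ℝ) * |u|) *
          (2 * (Real.sqrt (2 * Real.pi))⁻¹ * Real.exp ((|u|+1) ^ 2 / 2 - u ^ 2)) :=
        mul_le_mul h1 h2 (gfun_pos u).le (Real.exp_nonneg _)
    _ = 2 * (Real.sqrt (2 * Real.pi))⁻¹ *
          (Real.exp ((k:ℝ) * |u|) * Real.exp ((|u|+1) ^ 2 / 2 - u ^ 2)) := by ring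
    _ ≤ 2 * (Real.sqrt (2 * Real.pi))⁻¹ *
          (Real.exp (((k:ℝ)+1) ^ 2 + 1/2) * Real.exp (-u ^ 2 / 4)) := by
        apply mul_le_mul_of_nonneg_left h3 (by positivity)
    _ = 2 * (Real.sqrt (2 * Real.pi))⁻¹ * Real.exp (((k:ℝ)+1) ^ 2 + 1/2) *
          Real.exp (-u ^ 2 / 4) := by ring

lemma integrable_exp_quarter : Integrable (fun u : ℝ => Real.exp (-u ^ 2 / 4)) := by
  have h := integrable_exp_neg_mul_sq (by norm_num : (0:ℝ) < 1/4)
  have he : (fun u : ℝ => Real.exp (-u ^ 2 / 4)) = fun u : ℝ => Real.exp (-(1/4 : ℝ) * u ^ 2) := by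
    funext u; congr 1; ring
  rw [he]; exact h

lemma ukg_meas (k : ℕ) : Measurable fun u : ℝ => u ^ k * gfun u :=
  (measurable_id.pow_const k).mul gfun_meas

lemma integrable_ukg (k : ℕ) : Integrable (fun u : ℝ => u ^ k * gfun u) := by
  apply Integrable.mono
    (integrable_exp_quarter.const_mul
      (2 * (Real.sqrt (2 * Real.pi))⁻¹ * Real.exp (((k:ℝ)+1) ^ 2 + 1/2)))
    (ukg_meas k).aestronglyMeasurable
  filter_upwards with u
  rw [norm_eq_abs, norm_eq_abs, abs_mul, abs_pow, abs_of_pos (gfun_pos u)]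
  have h := ukg_le k u
  have hb : (0:ℝ) ≤ 2 * (Real.sqrt (2 * Real.pi))⁻¹ * Real.exp (((k:ℝ)+1) ^ 2 + 1/2) *
      Real.exp (-u ^ 2 / 4) := by positivity
  rw [abs_of_nonneg hb]
  exact h

lemma Ndens_pos (μ : ℝ) {σ : ℝ} (hσ : 0 < σ) (x : ℝ) : 0 < Ndens μ σ x := by
  unfold Ndens
  have h : (0:ℝ) < 2 * Real.pi * σ ^ 2 := by positivity
  exact mul_pos (inv_pos.2 (Real.sqrt_pos.2 h)) (Real.exp_pos _)

lemma Ndens_le (μ : ℝ) {σ : ℝ} (hσ : 0 < σ) (x : ℝ) :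
    Ndens μ σ x ≤ (Real.sqrt (2 * Real.pi * σ ^ 2))⁻¹ := by
  unfold Ndens
  have h1 : Real.exp (-(x - μ) ^ 2 / (2 * σ ^ 2)) ≤ 1 := by
    apply Real.exp_le_one_iff.2
    apply div_nonpos_of_nonpos_of_nonneg (neg_nonpos.2 (sq_nonneg _)) (by positivity)
  calc (Real.sqrt (2 * Real.pi * σ ^ 2))⁻¹ * Real.exp (-(x - μ) ^ 2 / (2 * σ ^ 2))
      ≤ (Real.sqrt (2 * Real.pi * σ ^ 2))⁻¹ * 1 :=
        mul_le_mul_of_nonneg_left h1 (inv_nonneg.2 (Real.sqrt_nonneg _))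
    _ = (Real.sqrt (2 * Real.pi * σ ^ 2))⁻¹ := mul_one _

lemma Ndens_cont (μ σ : ℝ) : Continuous (Ndens μ σ) := by
  unfold Ndens
  exact continuous_const.mul (Real.continuous_exp.comp (by fun_prop))

/-- Change of variables: `A` as a one-dimensional integral against `gfun`. -/
lemma A_eq (μ : ℝ) {σ : ℝ} (hσ : 0 < σ) (k : ℕ) {α β : ℝ} (hα : 0 < α) (hβ : 0 < β) :
    A μ σ k α β = β ^ (k+1) * ∫ u : ℝ, u ^ k * gfun u * Ndens μ σ (Real.log α + β * u) := by
  have step1 : A μ σ k α β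
      = ∫ x : ℝ, (x - Real.log α) ^ k * gfun ((x - Real.log α) / β) * Ndens μ σ x := by
    unfold A
    rw [show Set.Ioi (0:ℝ) = Real.exp '' Set.univ from by rw [Set.image_univ, Real.range_exp]]
    rw [integral_image_eq_integral_abs_deriv_smul MeasurableSet.univ
      (fun x _ => (Real.hasDerivAt_exp x).hasDerivWithinAt) Real.exp_injective.injOn]
    rw [setIntegral_univ]
    congr 1; funext x
    rw [smul_eq_mul, abs_of_pos (Real.exp_pos x)]
    simp only [pLN, Ndens, Real.log_exp, Real.log_div (Real.exp_ne_zero x) hα.ne']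
    rw [gfun_def]
    have hx := Real.exp_ne_zero x
    have hS : Real.sqrt (2 * Real.pi * σ ^ 2) ≠ 0 :=
      (Real.sqrt_pos.2 (by positivity)).ne'
    field_simp
  set h : ℝ → ℝ := fun x => (x - Real.log α) ^ k * gfun ((x - Real.log α) / β) * Ndens μ σ x
    with hh
  have e1 : (∫ u : ℝ, h (β * u + Real.log α)) = |β⁻¹| • ∫ x : ℝ, h x := by
    rw [MeasureTheory.Measure.integral_comp_mul_left (fun y => h (y + Real.log α)) β]
    congr 1
    exact integral_add_right_eq_self h (Real.log α)
  have e2 : (∫ x : ℝ, h x) = β * ∫ u : ℝ, h (β * u + Real.log α) := by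
    rw [e1, smul_eq_mul, abs_inv, abs_of_pos hβ]
    field_simp
  have e3 : ∀ u : ℝ, h (β * u + Real.log α)
      = β ^ k * (u ^ k * gfun u * Ndens μ σ (Real.log α + β * u)) := by
    intro u
    rw [hh]
    simp only [add_sub_cancel_right]
    rw [mul_comm β u, mul_div_assoc, div_self hβ.ne', mul_one, mul_pow]
    ring
  rw [step1, e2]
  simp_rw [e3]
  rw [integral_const_mul]
  rw [pow_succ]
  ring

/-- The dominated-convergence limit. -/
lemma key (μ : ℝ) {σ : ℝ} (hσ : 0 < σ) (k : ℕ) (c : ℝ) :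
    Tendsto (fun β : ℝ => ∫ u : ℝ, u ^ k * gfun u * Ndens μ σ (c + β * u))
      (nhdsWithin 0 (Set.Ioi 0))
      (nhds ((∫ u : ℝ, u ^ k * gfun u) * Ndens μ σ c)) := by
  rw [← integral_mul_const]
  apply tendsto_integral_filter_of_dominated_convergence
    (fun u : ℝ => (Real.sqrt (2 * Real.pi * σ ^ 2))⁻¹ *
      (2 * (Real.sqrt (2 * Real.pi))⁻¹ * Real.exp (((k:ℝ)+1) ^ 2 + 1/2) *
        Real.exp (-u ^ 2 / 4)))
  · refine Eventually.of_forall fun β => ?_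
    exact ((ukg_meas k).mul
      (((Ndens_cont μ σ).comp (continuous_const.add (continuous_const.mul continuous_id))).measurable)).aestronglyMeasurable
  · refine Eventually.of_forall fun β => Eventually.of_forall fun u => ?_
    rw [norm_eq_abs, abs_mul, abs_mul, abs_pow, abs_of_pos (gfun_pos u),
      abs_of_pos (Ndens_pos μ hσ _)]
    calc |u| ^ k * gfun u * Ndens μ σ (c + β * u)
        ≤ (2 * (Real.sqrt (2 * Real.pi))⁻¹ * Real.exp (((k:ℝ)+1) ^ 2 + 1/2) *
            Real.exp (-u ^ 2 / 4)) * (Real.sqrt (2 * Real.pi * σ ^ 2))⁻¹ :=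
          mul_le_mul (ukg_le k u) (Ndens_le μ hσ _) (Ndens_pos μ hσ _).le (by positivity)
      _ = _ := by ring
  · exact (integrable_exp_quarter.const_mul _).const_mul _
  · refine Eventually.of_forall fun u => ?_
    have hc : Continuous fun β : ℝ => u ^ k * gfun u * Ndens μ σ (c + β * u) :=
      continuous_const.mul ((Ndens_cont μ σ).comp
        (continuous_const.add (continuous_id.mul continuous_const)))
    have h2 : Tendsto (fun β : ℝ => u ^ k * gfun u * Ndens μ σ (c + β * u))
        (nhdsWithin 0 (Set.Ioi 0)) (nhds (u ^ k * gfun u * Ndens μ σ (c + 0 * u))) :=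
      (hc.tendsto 0).mono_left nhdsWithin_le_nhds
    simpa using h2

lemma int_pos (k : ℕ) (hk : Even k) : 0 < ∫ u : ℝ, u ^ k * gfun u := by
  rw [integral_pos_iff_support_of_nonneg
    (fun u => mul_nonneg (hk.pow_nonneg u) (gfun_pos u).le) (integrable_ukg k)]
  have hsub : Set.Ioi (0:ℝ) ⊆ Function.support fun u : ℝ => u ^ k * gfun u := by
    intro u hu
    simp only [Function.mem_support]
    exact (mul_pos (pow_pos hu k) (gfun_pos u)).ne'
  calc (0:ENNReal) < volume (Set.Ioi (0:ℝ)) := by simp [Real.volume_Ioi]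
    _ ≤ _ := measure_mono hsub

lemma int_odd : (∫ u : ℝ, u ^ 1 * gfun u) = 0 := by
  have h := integral_neg_eq_self (fun u : ℝ => u ^ 1 * gfun u) volume
  simp only [gfun_even, pow_one, neg_mul] at h
  rw [integral_neg] at h
  simp only [pow_one]
  linarith

/-- For the log-normal IM density, for each fixed `α > 0`: for `k = 0, 2` there are
`D_k(α) > 0` with `A_{k1,k2}(α,β) ~ D_k(α)·β^{k+1}` as `β → 0⁺`, and
`A_{11,12}(α,β) = o(β²)` as `β → 0⁺`. -/
theorem stmt8 (μ σ : ℝ) (hσ : 0 < σ) (α : ℝ) (hα : 0 < α) :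
    (∃ D0 > (0 : ℝ), Filter.Tendsto (fun β : ℝ => A μ σ 0 α β / (D0 * β ^ (0 + 1)))
        (nhdsWithin 0 (Set.Ioi 0)) (nhds 1)) ∧
    (∃ D2 > (0 : ℝ), Filter.Tendsto (fun β : ℝ => A μ σ 2 α β / (D2 * β ^ (2 + 1)))
        (nhdsWithin 0 (Set.Ioi 0)) (nhds 1)) ∧
    Filter.Tendsto (fun β : ℝ => A μ σ 1 α β / β ^ 2)
      (nhdsWithin 0 (Set.Ioi 0)) (nhds 0) := by
  have hNd : 0 < Ndens μ σ (Real.log α) := Ndens_pos μ hσ _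
  have ev : ∀ᶠ β in nhdsWithin (0:ℝ) (Set.Ioi 0), β ∈ Set.Ioi (0:ℝ) :=
    eventually_mem_nhdsWithin
  have main : ∀ k : ℕ, Even k →
      ∃ D > (0 : ℝ), Filter.Tendsto (fun β : ℝ => A μ σ k α β / (D * β ^ (k + 1)))
        (nhdsWithin 0 (Set.Ioi 0)) (nhds 1) := by
    intro k hk
    set D : ℝ := (∫ u : ℝ, u ^ k * gfun u) * Ndens μ σ (Real.log α) with hD
    have hDpos : 0 < D := mul_pos (int_pos k hk) hNd
    refine ⟨D, hDpos, ?_⟩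
    have hkey := (key μ hσ k (Real.log α)).div_const D
    rw [← hD, div_self hDpos.ne'] at hkey
    apply hkey.congr'
    filter_upwards [ev] with β hβ
    have hβ' : (0:ℝ) < β := hβ
    rw [A_eq μ hσ k hα hβ']
    rw [mul_comm D (β ^ (k+1)), mul_div_mul_left _ _ (pow_ne_zero _ hβ'.ne')]
  refine ⟨main 0 Even.zero, main 2 (by decide), ?_⟩
  have hkey := key μ hσ 1 (Real.log α)
  rw [int_odd, zero_mul] at hkey
  apply hkey.congr'
  filter_upwards [ev] with β hβ
  have hβ' : (0:ℝ) < β := hβ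
  rw [A_eq μ hσ 1 hα hβ']
  rw [show (1:ℕ)+1 = 2 from rfl, mul_div_cancel_left₀ _ (pow_ne_zero 2 hβ'.ne')]
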